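/- For a feasible score sequence R of length n, the minimum number of upsets over all tournaments with score sequence R equals ℓ = sum over indices i with h_i > 0 of h_i, where h_i = r_i - (i-1) is the normalized score vector (Ryser's theorem). -/

import Mathlib

/-- `r` is a feasible score sequence of length `n`: nondecreasing, total sum
`n(n-1)/2`, and satisfying the Landau inequalities. -/
def IsFeasible (n : ℕ) (r : Fin n → ℤ) : Prop :=
  Monotone r ∧ (∑ i, r i) = (n.choose 2 : ℤ) ∧
    ∀ k : ℕ, k ≤ n →
      (k.choose 2 : ℤ) ≤ ∑ i ∈ Finset.univ.filter (fun i : Fin n => (i : ℕ) < k), r i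

/-- `A` is (the adjacency matrix of) a tournament on `n` vertices. -/
def IsTournament {n : ℕ} (A : Fin n → Fin n → ℤ) : Prop :=
  (∀ i, A i i = 0) ∧
    ∀ i j, i ≠ j → (A i j = 1 ∧ A j i = 0) ∨ (A i j = 0 ∧ A j i = 1)

/-- The number of upsets of a tournament: entries `a_{ij} = 1` with `i < j`. -/
def upsets {n : ℕ} (A : Fin n → Fin n → ℤ) : ℕ :=
  (Finset.univ.filter (fun p : Fin n × Fin n => p.1 < p.2 ∧ A p.1 p.2 = 1)).card

/-- There is exactly one tournament matrix with score sequence `r` attaining the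
minimum number of upsets, i.e. `|U_min(R)| = 1`. -/
def UminUnique {n : ℕ} (r : Fin n → ℤ) : Prop :=
  ∃! A : Fin n → Fin n → ℤ,
    IsTournament A ∧ (∀ i, (∑ j, A i j) = r i) ∧
      ∀ B : Fin n → Fin n → ℤ, IsTournament B → (∀ i, (∑ j, B i j) = r i) →
        upsets A ≤ upsets B

/-- The symmetric block `(p, p-1, ..., 1, 0^t, -1, -2, ..., -p)`. -/
def symBlock (p t : ℕ) : List ℤ :=
  ((List.range p).map (fun s => (p : ℤ) - s)) ++ List.replicate t 0 ++
    (List.range p).map (fun s => -((s : ℤ) + 1))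

/-- A symmetric vector: either all zeros, or `(p, ..., 1, 0^t, -1, ..., -p)`
for some positive `p`. -/
def IsSymBlock (B : List ℤ) : Prop :=
  (∃ t, B = List.replicate t 0) ∨ ∃ p t, 0 < p ∧ B = symBlock p t

/-- `H` is a concatenation of symmetric vectors. -/
def IsConcatSym (H : List ℤ) : Prop :=
  ∃ L : List (List ℤ), H = L.flatten ∧ ∀ B ∈ L, IsSymBlock B

/-- The normalized score vector `h_i = r_i - (i-1)` of `r`, as a list. -/
def normalized (n : ℕ) (r : Fin n → ℤ) : List ℤ :=
  List.ofFn (fun i : Fin n => r i - (i : ℕ))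

section RyserAux
open Finset

def chE (n : ℕ) (h : ℕ → ℤ) (j : ℕ) : ℕ :=
  if j + 1 < n ∧ h j < 0 ∧ h (j+1) = h j - 1 then chE n h (j+1) + 1 else 0
termination_by n - j
decreasing_by omega

def chB (h : ℕ → ℤ) : ℕ → ℕ
  | 0 => 0
  | (j+1) => if h j < 0 ∧ h (j+1) = h j - 1 then chB h j + 1 else 0

def nu (h : ℕ → ℤ) (k : ℕ) : ℕ := ((range (k+1)).filter (fun j => h j < 0)).card

def rnk (n : ℕ) (h : ℕ → ℤ) (j : ℕ) : ℤ := (nu h j : ℤ) + chE n h j - chB h j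

def Bset (n : ℕ) (h : ℕ → ℤ) (m : ℤ) : Finset ℕ :=
  (range n).filter (fun j => h j < 0 ∧ rnk n h j ≤ m)

lemma chE_pos (n : ℕ) (h : ℕ → ℤ) (j : ℕ) (H : j + 1 < n ∧ h j < 0 ∧ h (j+1) = h j - 1) :
    chE n h j = chE n h (j+1) + 1 := by rw [chE, if_pos H]

lemma chE_zero (n : ℕ) (h : ℕ → ℤ) (j : ℕ) (H : ¬(j + 1 < n ∧ h j < 0 ∧ h (j+1) = h j - 1)) :
    chE n h j = 0 := by rw [chE, if_neg H]

lemma nu_mono (h : ℕ → ℤ) : Monotone (nu h) := by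
  intro a b hab
  exact Finset.card_le_card (Finset.filter_subset_filter _ (by
    intro x hx; simp only [mem_range] at *; omega))

lemma nu_succ_neg (h : ℕ → ℤ) (j : ℕ) (hj : h (j+1) < 0) : nu h (j+1) = nu h j + 1 := by
  unfold nu
  rw [Finset.range_add_one, Finset.filter_insert, if_pos hj,
    Finset.card_insert_of_notMem (by simp)]

lemma nu_succ_nonneg (h : ℕ → ℤ) (j : ℕ) (hj : ¬ h (j+1) < 0) : nu h (j+1) = nu h j := by
  unfold nu
  rw [Finset.range_add_one, Finset.filter_insert, if_neg hj]

/-- forward chain structure -/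
lemma chain_fwd (n : ℕ) (h : ℕ → ℤ) : ∀ t j, j < n → t ≤ chE n h j →
    h (j + t) = h j - t ∧ j + t < n ∧ chE n h (j + t) + t = chE n h j ∧
      nu h (j + t) = nu h j + t := by
  intro t
  induction t with
  | zero => intro j hj _; simpa using hj
  | succ t ih =>
    intro j hj ht
    have hg : j + 1 < n ∧ h j < 0 ∧ h (j+1) = h j - 1 := by
      by_contra hc
      rw [chE_zero n h j hc] at ht; omega
    have he := chE_pos n h j hg
    have ih' := ih (j+1) hg.1 (by omega)
    obtain ⟨v, hn, hc, hnu⟩ := ih'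
    have hjt : j + (t+1) = (j+1) + t := by ring
    refine ⟨?_, ?_, ?_, ?_⟩
    · rw [hjt, v, hg.2.2]; push_cast; ring
    · omega
    · rw [hjt]; omega
    · rw [hjt, hnu, nu_succ_neg h j (by rw [hg.2.2]; linarith [hg.2.1])]; ring

/-- backward chain structure -/
lemma chain_bwd (h : ℕ → ℤ) : ∀ t j, h j < 0 → t ≤ chB h j →
    h (j - t) = h j + t ∧ t ≤ j ∧ chB h (j - t) + t = chB h j ∧
      (nu h j : ℤ) = nu h (j - t) + t ∧ h (j - t) < 0 := by
  intro t
  induction t with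
  | zero => intro j hj _; simpa using hj
  | succ t ih =>
    intro j hj ht
    match j, ht with
    | 0, ht => simp [chB] at ht
    | (j'+1), ht =>
      have hg : h j' < 0 ∧ h (j'+1) = h j' - 1 := by
        by_contra hc
        rw [chB, if_neg hc] at ht; omega
      have hb : chB h (j'+1) = chB h j' + 1 := by rw [chB, if_pos hg]
      obtain ⟨v, hle, hcb, hnu, hneg⟩ := ih j' hg.1 (by omega)
      have hjt : j' + 1 - (t+1) = j' - t := by omega
      have hnu' : nu h (j'+1) = nu h j' + 1 := nu_succ_neg h j' hj
      refine ⟨?_, by omega, by rw [hjt]; omega, by rw [hjt]; push_cast [hnu']; omega, by rwa [hjt]⟩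
      · rw [hjt, v, hg.2]; push_cast; ring


lemma chB_fwd (n : ℕ) (h : ℕ → ℤ) : ∀ t j, j < n → t ≤ chE n h j →
    chB h (j + t) = chB h j + t := by
  intro t
  induction t with
  | zero => intro j _ _; simp
  | succ t ih =>
    intro j hj ht
    have hg : j + 1 < n ∧ h j < 0 ∧ h (j+1) = h j - 1 := by
      by_contra hc
      rw [chE_zero n h j hc] at ht; omega
    have he := chE_pos n h j hg
    have := ih (j+1) hg.1 (by omega)
    have hb : chB h (j+1) = chB h j + 1 := by rw [chB, if_pos ⟨hg.2.1, hg.2.2⟩]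
    have hjt : j + (t+1) = (j+1) + t := by ring
    rw [hjt, this, hb]; ring

lemma rnk_chain (n : ℕ) (h : ℕ → ℤ) (j t : ℕ) (hj : j < n) (ht : t ≤ chE n h j) :
    rnk n h (j + t) = rnk n h j - t := by
  obtain ⟨_, _, hc, hnu⟩ := chain_fwd n h t j hj ht
  have hb := chB_fwd n h t j hj ht
  unfold rnk
  rw [hnu, hb]
  push_cast
  omega

lemma rnk_ge (n : ℕ) (h : ℕ → ℤ) (j : ℕ) (hj : j < n) (hn : h j < 0) :
    (chE n h j : ℤ) + 1 ≤ rnk n h j := by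
  have hsub : Finset.Icc (j - chB h j) j ⊆ (range (j+1)).filter (fun p => h p < 0) := by
    intro p hp
    simp only [Finset.mem_Icc] at hp
    simp only [mem_filter, mem_range]
    constructor
    · omega
    · have : p = j - (j - p) := by omega
      rw [this]
      exact (chain_bwd h (j - p) j hn (by omega)).2.2.2.2
  have hcard := Finset.card_le_card hsub
  have hle : chB h j ≤ j := (chain_bwd h (chB h j) j hn le_rfl).2.1
  rw [Nat.card_Icc] at hcard
  have : chB h j + 1 ≤ nu h j := by unfold nu; omega
  unfold rnk; push_cast; omega

lemma rnk_le_end (n : ℕ) (h : ℕ → ℤ) (j : ℕ) (hj : j < n) :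
    rnk n h j ≤ nu h (j + chE n h j) := by
  obtain ⟨_, _, _, hnu⟩ := chain_fwd n h (chE n h j) j hj le_rfl
  unfold rnk; rw [hnu]; push_cast; omega

lemma rnk_cross (n : ℕ) (h : ℕ → ℤ) (x y : ℕ) (hx : x < n) (hy : y < n)
    (hnx : h x < 0) (hny : h y < 0) (hlt : x + chE n h x < y) :
    rnk n h x < rnk n h y := by
  obtain ⟨hva', hxn, hcx, hnux⟩ := chain_fwd n h (chE n h x) x hx le_rfl
  have hE0 : chE n h (x + chE n h x) = 0 := by omega
  obtain ⟨hv0, hle0, hcb0, hnu0, hneg0⟩ := chain_bwd h (chB h y) y hny le_rfl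
  have hkey : x + chE n h x < y - chB h y := by
    by_contra hc
    push_neg at hc
    have ht2 : y - (x + chE n h x) ≤ chB h y := by omega
    obtain ⟨hva, -, -, -, hnega⟩ := chain_bwd h (y - (x + chE n h x)) y hny ht2
    obtain ⟨hvb, -, -, -, -⟩ := chain_bwd h (y - (x + chE n h x) - 1) y hny (by omega)
    rw [show y - (y - (x + chE n h x)) = x + chE n h x by omega] at hva hnega
    rw [show y - (y - (x + chE n h x) - 1) = x + chE n h x + 1 by omega] at hvb
    have := chE_pos n h (x + chE n h x) ⟨by omega, hnega, by omega⟩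
    omega
  have h1 : rnk n h x ≤ (nu h (x + chE n h x) : ℤ) := rnk_le_end n h x hx
  have h2 : (nu h (y - chB h y) : ℤ) ≤ rnk n h y := by unfold rnk; omega
  have h3 : nu h (x + chE n h x) < nu h (y - chB h y) := by
    have e1 := nu_succ_neg h (y - chB h y - 1)
      (by rw [show y - chB h y - 1 + 1 = y - chB h y by omega]; exact hneg0)
    rw [show y - chB h y - 1 + 1 = y - chB h y by omega] at e1
    have e2 := nu_mono h (show x + chE n h x ≤ y - chB h y - 1 by omega)
    omega
  omega

lemma rnk_injOn_ne (n : ℕ) (h : ℕ → ℤ) (x y : ℕ) (hx : x < n) (hy : y < n)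
    (hnx : h x < 0) (hny : h y < 0) (hxy : x ≠ y) : rnk n h x ≠ rnk n h y := by
  wlog hlt : x < y generalizing x y
  · exact (this y x hy hx hny hnx hxy.symm (by omega)).symm
  rcases le_or_gt y (x + chE n h x) with hc | hc
  · have := rnk_chain n h x (y - x) hx (by omega)
    rw [show x + (y - x) = y by omega] at this
    omega
  · exact ne_of_lt (rnk_cross n h x y hx hy hnx hny hc)

lemma gauss2 : ∀ K : ℕ, 2 * ∑ j ∈ range K, ((K:ℤ) - j) = K * (K+1) := by
  intro K
  induction K with
  | zero => simp
  | succ K ih =>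
    rw [Finset.sum_range_succ]
    have : ∑ j ∈ range K, ((K:ℤ) + 1 - j) = ∑ j ∈ range K, (((K:ℤ) - j) + 1) := by
      apply Finset.sum_congr rfl; intro x hx; push_cast; ring
    push_cast
    rw [this, Finset.sum_add_distrib]
    push_cast at ih ⊢
    simp only [Finset.sum_const, Finset.card_range, nsmul_eq_mul] at *
    nlinarith [ih]

section Core

variable {n : ℕ} {h : ℕ → ℤ}

lemma hstair (Hdrop : ∀ j, h j - 1 ≤ h (j+1)) : ∀ j : ℕ, h 0 - j ≤ h j := by
  intro j
  induction j with
  | zero => simp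
  | succ j ih => have := Hdrop j; push_cast; push_cast at ih; omega

lemma hneg_ge (Hp0 : 0 ≤ h 0) (Hdrop : ∀ j, h j - 1 ≤ h (j+1)) :
    ∀ j : ℕ, -(nu h j : ℤ) ≤ h j := by
  intro j
  induction j with
  | zero => have : (0:ℤ) ≤ nu h 0 := by positivity
            omega
  | succ j ih =>
    by_cases hc : h (j+1) < 0
    · rw [nu_succ_neg h j hc]
      have := Hdrop j
      push_cast; omega
    · have : (0:ℤ) ≤ nu h (j+1) := by positivity
      omega

lemma negsum (Hp0 : 0 ≤ h 0) (Hdrop : ∀ j, h j - 1 ≤ h (j+1)) :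
    ∀ k : ℕ, 2 * (∑ j ∈ (range (k+1)).filter (fun j => h j < 0), (-h j))
      ≤ (nu h k) * (nu h k + 1) := by
  intro k
  induction k with
  | zero =>
    rw [show (range 1).filter (fun j => h j < 0) = ∅ by
      ext x; simp only [mem_filter, mem_range, Finset.notMem_empty, iff_false]
      rintro ⟨hx, hneg⟩
      interval_cases x
      omega]
    have hp : (0:ℤ) ≤ (nu h 0) * ((nu h 0:ℤ) + 1) := by positivity
    simpa using hp
  | succ k ih =>
    rw [Finset.range_add_one, Finset.filter_insert]
    by_cases hc : h (k+1) < 0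
    · rw [if_pos hc, Finset.sum_insert (by simp), nu_succ_neg h k hc]
      have hb := hneg_ge Hp0 Hdrop (k+1)
      rw [nu_succ_neg h k hc] at hb
      push_cast
      push_cast at hb ih
      nlinarith [ih, hb]
    · rw [if_neg hc, nu_succ_nonneg h k hc]
      exact ih

lemma sum_ge_of_few_negs (Hp0 : 0 ≤ h 0) (Hdrop : ∀ j, h j - 1 ≤ h (j+1)) :
    ∀ k : ℕ, (nu h k : ℤ) < h 0 → h 0 ≤ ∑ j ∈ range (k+1), h j := by
  intro k hk
  by_cases hcase : (k:ℤ) < h 0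
  · -- all terms positive, bounded below by h0 - j
    have hterm : ∀ j ∈ range (k+1), h 0 - (j:ℤ) ≤ h j := fun j _ => hstair Hdrop j
    have hsum : ∑ j ∈ range (k+1), (h 0 - (j:ℤ)) ≤ ∑ j ∈ range (k+1), h j :=
      Finset.sum_le_sum hterm
    have hsplit : ∑ j ∈ range (k+1), (h 0 - (j:ℤ))
        = (k+1) * h 0 - ∑ j ∈ range (k+1), (j:ℤ) := by
      rw [Finset.sum_sub_distrib]
      simp [mul_comm]
    have hg2 : 2 * ∑ j ∈ range (k+1), (j:ℤ) = (k+1) * k := by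
      have hnat := Finset.sum_range_id_mul_two (k+1)
      have hcast : ∑ j ∈ range (k+1), (j:ℤ) = ((∑ j ∈ range (k+1), j : ℕ) : ℤ) := by
        push_cast; ring
      rw [hcast]
      have hc2 : ((∑ j ∈ range (k+1), j : ℕ) : ℤ) * 2 = ((k+1) : ℤ) * k := by
        exact_mod_cast congrArg (Nat.cast : ℕ → ℤ) (by simpa using hnat)
      linarith
    nlinarith [hsum, hsplit, hg2]
  · push_neg at hcase
    set M := (h 0).toNat with hM
    have hMv : (M:ℤ) = h 0 := Int.toNat_of_nonneg Hp0
    have hsubset : range M ⊆ (range (k+1)).filter (fun j => ¬ h j < 0) := by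
      intro j hj
      simp only [mem_range] at hj
      have h1 : h 0 - (j:ℤ) ≤ h j := hstair Hdrop j
      simp only [mem_filter, mem_range, not_lt]
      constructor
      · omega
      · have : (j:ℤ) < M := by exact_mod_cast hj
        omega
    have h2 : ∑ j ∈ range M, h j ≤ ∑ j ∈ (range (k+1)).filter (fun j => ¬ h j < 0), h j := by
      apply Finset.sum_le_sum_of_subset_of_nonneg hsubset
      intro j hj _
      simp only [mem_filter, not_lt] at hj
      exact hj.2
    have h3 : ∑ j ∈ range M, ((M:ℤ) - j) ≤ ∑ j ∈ range M, h j := by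
      apply Finset.sum_le_sum
      intro j _
      have := hstair Hdrop j
      omega
    have h4 := gauss2 M
    have h5 := negsum Hp0 Hdrop k
    have h6 : ∑ j ∈ (range (k+1)).filter (fun j => h j < 0), h j
        = -∑ j ∈ (range (k+1)).filter (fun j => h j < 0), (-h j) := by
      rw [← Finset.sum_neg_distrib]; simp
    have h7 := Finset.sum_filter_add_sum_filter_not (range (k+1)) (fun j => h j < 0) h
    have h8 : (nu h k : ℤ) ≤ (M:ℤ) - 1 := by omega
    have h9 : (0:ℤ) ≤ nu h k := by positivity
    nlinarith [h2, h3, h4, h5, h6, h7, h8]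

end Core

section Card

variable {n : ℕ} {h : ℕ → ℤ}

lemma mem_Bset {m : ℤ} {j : ℕ} :
    j ∈ Bset n h m ↔ j < n ∧ h j < 0 ∧ rnk n h j ≤ m := by
  simp [Bset, and_assoc]

lemma rnk_injOn (hx : 1 ≤ n) :
    Set.InjOn (rnk n h) ((range n).filter (fun j => h j < 0)) := by
  intro x hxx y hyy hxy
  simp only [coe_filter, Set.mem_setOf_eq, mem_range] at hxx hyy
  by_contra hne
  exact rnk_injOn_ne n h x y hxx.1 hyy.1 hxx.2 hyy.2 hne hxy

lemma chE_lt (j : ℕ) (hj : j < n) : j + chE n h j < n :=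
  (chain_fwd n h (chE n h j) j hj le_rfl).2.1

lemma negs_card (hn : 1 ≤ n) :
    ((range n).filter (fun j => h j < 0)).card = nu h (n-1) := by
  unfold nu
  rw [show n - 1 + 1 = n by omega]

lemma image_rnk (hn : 1 ≤ n) :
    ((range n).filter (fun j => h j < 0)).image (rnk n h)
      = Finset.Icc (1:ℤ) (nu h (n-1)) := by
  apply Finset.eq_of_subset_of_card_le
  · intro z hz
    simp only [Finset.mem_image, mem_filter, mem_range] at hz
    obtain ⟨j, ⟨hjn, hjneg⟩, rfl⟩ := hz
    rw [Finset.mem_Icc]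
    constructor
    · have := rnk_ge n h j hjn hjneg
      have : (0:ℤ) ≤ chE n h j := by positivity
      omega
    · calc rnk n h j ≤ (nu h (j + chE n h j) : ℤ) := rnk_le_end n h j hjn
        _ ≤ (nu h (n-1) : ℤ) := by
            have h1 : j + chE n h j ≤ n - 1 := by have := chE_lt (h := h) j hjn; omega
            exact_mod_cast nu_mono h h1
  · rw [Finset.card_image_of_injOn (rnk_injOn hn), negs_card hn, Int.card_Icc]
    simp

lemma card_Bset (hn : 1 ≤ n) (Hp0 : 0 ≤ h 0) (Hdrop : ∀ j, h j - 1 ≤ h (j+1))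
    (Hsum : ∑ j ∈ range n, h j = 0) :
    ((Bset n h (h 0)).card : ℤ) = h 0 := by
  have hc_ge : h 0 ≤ (nu h (n-1) : ℤ) := by
    by_contra hcon
    push_neg at hcon
    have := sum_ge_of_few_negs Hp0 Hdrop (n-1) hcon
    rw [show n - 1 + 1 = n by omega, Hsum] at this
    have : (0:ℤ) ≤ nu h (n-1) := by positivity
    omega
  have hBeq : Bset n h (h 0)
      = ((range n).filter (fun j => h j < 0)).filter (fun j => rnk n h j ≤ h 0) := by
    unfold Bset
    rw [Finset.filter_filter]
  have himg : (Bset n h (h 0)).image (rnk n h)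
      = (((range n).filter (fun j => h j < 0)).image (rnk n h)).filter (fun z => z ≤ h 0) := by
    rw [hBeq]
    ext z
    simp only [Finset.mem_image, mem_filter, mem_range]
    constructor
    · rintro ⟨j, ⟨⟨hj1, hj2⟩, hj3⟩, rfl⟩
      exact ⟨⟨j, ⟨hj1, hj2⟩, rfl⟩, hj3⟩
    · rintro ⟨⟨j, ⟨hj1, hj2⟩, rfl⟩, hz⟩
      exact ⟨j, ⟨⟨hj1, hj2⟩, hz⟩, rfl⟩
  have hfilterIcc : ((Finset.Icc (1:ℤ) (nu h (n-1))).filter (fun z => z ≤ h 0))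
      = Finset.Icc (1:ℤ) (h 0) := by
    ext z
    simp only [mem_filter, Finset.mem_Icc]
    omega
  have hcard : (Bset n h (h 0)).card = ((Bset n h (h 0)).image (rnk n h)).card := by
    rw [Finset.card_image_of_injOn]
    apply Set.InjOn.mono _ (rnk_injOn hn)
    rw [hBeq]
    intro x hx
    simp only [coe_filter, Set.mem_setOf_eq, mem_filter, mem_range] at hx ⊢
    exact ⟨hx.1.1, hx.1.2⟩
  rw [hcard, himg, image_rnk hn, hfilterIcc, Int.card_Icc]
  omega

end Card

section Prefix

variable {n : ℕ} {h : ℕ → ℤ}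

lemma Bset_closure {m : ℤ} (j : ℕ) (hj : j ∈ Bset n h m) (hd : h (j+1) = h j - 1)
    (hjn : j + 1 < n) : j + 1 ∈ Bset n h m := by
  rw [mem_Bset] at hj ⊢
  obtain ⟨h1, h2, h3⟩ := hj
  have hg : j + 1 < n ∧ h j < 0 ∧ h (j+1) = h j - 1 := ⟨hjn, h2, hd⟩
  have hE : 1 ≤ chE n h j := by rw [chE_pos n h j hg]; omega
  have := rnk_chain n h j 1 h1 hE
  exact ⟨hjn, by omega, by omega⟩

lemma prefix_bound (hn : 1 ≤ n) (Hp0 : 0 ≤ h 0) (Hdrop : ∀ j, h j - 1 ≤ h (j+1))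
    (Hzero : ∀ j, n ≤ j → h j = 0) (Hpre : ∀ k, 0 ≤ ∑ j ∈ range k, h j)
    (Hsum : ∑ j ∈ range n, h j = 0) (k : ℕ) :
    h 0 - ∑ j ∈ range (k+1), h j ≤ (((Bset n h (h 0)).filter (fun j => j ≤ k)).card : ℤ) := by
  have hcB := card_Bset hn Hp0 Hdrop Hsum
  by_cases hsub : (Bset n h (h 0)).filter (fun j => ¬ j ≤ k) = ∅
  · have : (Bset n h (h 0)).filter (fun j => j ≤ k) = Bset n h (h 0) := by
      apply Finset.filter_true_of_mem
      intro j hj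
      by_contra hc
      have : j ∈ (Bset n h (h 0)).filter (fun j => ¬ j ≤ k) := by
        simp only [mem_filter]; exact ⟨hj, hc⟩
      rw [hsub] at this
      simp at this
    rw [this, hcB]
    have := Hpre (k+1)
    omega
  · obtain ⟨y₀, hy₀⟩ := Finset.nonempty_of_ne_empty hsub
    simp only [mem_filter, not_le] at hy₀
    by_cases hall : ∀ j, j < n → h j < 0 → j ≤ k → j ∈ Bset n h (h 0)
    · have husub : (range (k+1)).filter (fun j => h j < 0)
          ⊆ (Bset n h (h 0)).filter (fun j => j ≤ k) := by
        intro j hj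
        simp only [mem_filter, mem_range] at hj ⊢
        have hjn : j < n := by
          by_contra hc
          rw [Hzero j (by omega)] at hj
          omega
        exact ⟨hall j hjn hj.2 (by omega), by omega⟩
      have hucard := Finset.card_le_card husub
      by_cases hnu : (nu h k : ℤ) < h 0
      · have := sum_ge_of_few_negs Hp0 Hdrop k hnu
        have : (0:ℕ) ≤ ((Bset n h (h 0)).filter (fun j => j ≤ k)).card := by positivity
        omega
      · push_neg at hnu
        have := Hpre (k+1)
        unfold nu at hnu
        omega
    · push_neg at hall
      obtain ⟨js, hjsn, hjsneg, hjsk, hjsB⟩ := hall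
      have hrnkjs : h 0 < rnk n h js := by
        by_contra hc
        exact hjsB (mem_Bset.2 ⟨hjsn, hjsneg, by omega⟩)
      have hbound : ∀ y ∈ Bset n h (h 0), k < y → y ≤ js + chE n h js := by
        intro y hy hky
        rw [mem_Bset] at hy
        by_contra hc
        have := rnk_cross n h js y hjsn hy.1 hjsneg hy.2.1 (by omega)
        omega
      have hj1n : js + chE n h js < n := chE_lt (h := h) js hjsn
      have hj1k : k < js + chE n h js := by
        have := hbound y₀ hy₀.1 hy₀.2
        omega
      -- cardinality estimate
      have hcsub : (Bset n h (h 0)).filter (fun j => ¬ j ≤ k)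
          ⊆ Finset.Ioc k (js + chE n h js) := by
        intro y hy
        simp only [mem_filter, not_le] at hy
        rw [Finset.mem_Ioc]
        exact ⟨hy.2, hbound y hy.1 hy.2⟩
      have hccard := Finset.card_le_card hcsub
      rw [Nat.card_Ioc] at hccard
      have hsplitc := Finset.card_filter_add_card_filter_not
        (s := Bset n h (h 0)) (p := fun j => j ≤ k)
      -- sum estimate
      have hsums : ∑ j ∈ Finset.Ico (k+1) (js + chE n h js + 1), h j
          ≤ -(((js + chE n h js) - k : ℕ) : ℤ) := by
        have hterms : ∀ j ∈ Finset.Ico (k+1) (js + chE n h js + 1), h j ≤ -1 := by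
          intro j hj
          rw [Finset.mem_Ico] at hj
          have ht : j - js ≤ chE n h js := by omega
          have := (chain_fwd n h (j - js) js hjsn ht).1
          rw [show js + (j - js) = j by omega] at this
          have : h j = h js - (j - js : ℕ) := this
          omega
        calc ∑ j ∈ Finset.Ico (k+1) (js + chE n h js + 1), h j
            ≤ ∑ _j ∈ Finset.Ico (k+1) (js + chE n h js + 1), (-1 : ℤ) :=
              Finset.sum_le_sum hterms
          _ = -(((js + chE n h js) - k : ℕ) : ℤ) := by
              rw [Finset.sum_const, Nat.card_Ico]
              simp only [nsmul_eq_mul, mul_neg, mul_one]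
              congr 1
              omega
      have hconsec : ∑ j ∈ range (k+1), h j + ∑ j ∈ Finset.Ico (k+1) (js + chE n h js + 1), h j
          = ∑ j ∈ range (js + chE n h js + 1), h j := by
        rw [Finset.range_eq_Ico, Finset.range_eq_Ico]
        exact Finset.sum_Ico_consecutive h (m := 0) (n := k+1) (k := js + chE n h js + 1) (by omega) (by omega)
      have hp2 := Hpre (js + chE n h js + 1)
      omega

end Prefix

/-! ### Bridging to score sequences -/


def hfun (N : ℕ) (r : Fin N → ℤ) : ℕ → ℤ :=
  fun k => if hk : k < N then r ⟨k, hk⟩ - k else 0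

lemma hfun_lt (N : ℕ) (r : Fin N → ℤ) (k : ℕ) (hk : k < N) :
    hfun N r k = r ⟨k, hk⟩ - k := dif_pos hk

lemma hfun_ge (N : ℕ) (r : Fin N → ℤ) (k : ℕ) (hk : N ≤ k) :
    hfun N r k = 0 := dif_neg (by omega)

lemma sum_range_choose2 (k : ℕ) : (∑ j ∈ range k, (j:ℤ)) = (k.choose 2 : ℤ) := by
  induction k with
  | zero => simp
  | succ k ih =>
    rw [Finset.sum_range_succ, ih, Nat.choose_succ_succ k 1]
    push_cast [Nat.choose_one_right]
    ring

lemma bridge_sum (N : ℕ) (r : Fin N → ℤ) (k : ℕ) (hk : k ≤ N) :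
    ∑ i ∈ Finset.univ.filter (fun i : Fin N => (i : ℕ) < k), r i
      = ∑ j ∈ range k, (hfun N r j + j) := by
  have h1 : ∑ i ∈ Finset.univ.filter (fun i : Fin N => (i : ℕ) < k), r i
      = ∑ i : Fin N, (fun j : ℕ => if j < k then (hfun N r j + j) else 0) (i : ℕ) := by
    rw [Finset.sum_filter]
    apply Finset.sum_congr rfl
    intro i _
    by_cases hik : (i:ℕ) < k
    · simp only [if_pos hik, hfun_lt N r i i.isLt]
      simp
    · simp [hik]
  have h2 := Fin.sum_univ_eq_sum_range (fun j => if j < k then hfun N r j + (j:ℤ) else 0) N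
  rw [h1, h2]
  rw [← Finset.sum_subset (Finset.range_subset_range.2 hk)]
  · apply Finset.sum_congr rfl
    intro j hj
    rw [mem_range] at hj
    simp [hj]
  · intro j _ hj
    rw [mem_range] at hj
    simp [hj]

lemma feas_facts (N : ℕ) (r : Fin N → ℤ) (hN : 1 ≤ N) (hR : IsFeasible N r) :
    (∀ j, hfun N r j - 1 ≤ hfun N r (j+1)) ∧ (∀ k, 0 ≤ ∑ j ∈ range k, hfun N r j) ∧
      (∑ j ∈ range N, hfun N r j = 0) ∧ 0 ≤ hfun N r 0 := by
  obtain ⟨hmono, htot, hlandau⟩ := hR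
  have key : ∀ k, k ≤ N → ∑ j ∈ range k, hfun N r j
      = (∑ i ∈ Finset.univ.filter (fun i : Fin N => (i : ℕ) < k), r i) - (k.choose 2 : ℤ) := by
    intro k hk
    have := bridge_sum N r k hk
    rw [Finset.sum_add_distrib, sum_range_choose2] at this
    omega
  have hsumN : ∑ j ∈ range N, hfun N r j = 0 := by
    rw [key N le_rfl]
    have : Finset.univ.filter (fun i : Fin N => (i : ℕ) < N) = Finset.univ := by
      apply Finset.filter_true_of_mem
      intro i _
      exact i.isLt
    rw [this, htot]
    ring
  have hpre : ∀ k, 0 ≤ ∑ j ∈ range k, hfun N r j := by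
    intro k
    by_cases hk : k ≤ N
    · rw [key k hk]
      have := hlandau k hk
      omega
    · push_neg at hk
      rw [← Finset.sum_subset (Finset.range_subset_range.2 (show N ≤ k by omega))]
      · rw [hsumN]
      · intro j _ hj
        rw [mem_range] at hj
        exact hfun_ge N r j (by omega)
  have hlast : hfun N r (N - 1) ≤ 0 := by
    have h1 := hpre (N - 1)
    have h2 := Finset.sum_range_succ (hfun N r) (N-1)
    rw [show N - 1 + 1 = N by omega] at h2
    omega
  refine ⟨?_, hpre, hsumN, ?_⟩
  · intro j
    by_cases hj1 : j + 1 < N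
    · rw [hfun_lt N r j (by omega), hfun_lt N r (j+1) hj1]
      have := hmono (show (⟨j, by omega⟩ : Fin N) ≤ ⟨j+1, hj1⟩ by
        rw [Fin.mk_le_mk]; omega)
      push_cast
      omega
    · by_cases hj2 : j < N
      · have hjN : j = N - 1 := by omega
        rw [hfun_ge N r (j+1) (by omega), hjN]
        omega
      · rw [hfun_ge N r j (by omega), hfun_ge N r (j+1) (by omega)]
        omega
  · have := hpre 1
    rwa [Finset.sum_range_one] at this

/-! ### The reduction step -/

def Bred (n : ℕ) (r : Fin (n+1) → ℤ) : Finset ℕ := Bset (n+1) (hfun (n+1) r) (r 0)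

def redr (n : ℕ) (r : Fin (n+1) → ℤ) : Fin n → ℤ :=
  fun j => r j.succ - 1 + (if ((j:ℕ)+1) ∈ Bred n r then 1 else 0)

lemma bridge_sum' (N : ℕ) (f : Fin N → ℤ) (k : ℕ) (hk : k ≤ N) :
    ∑ i ∈ Finset.univ.filter (fun i : Fin N => (i : ℕ) < k), f i
      = ∑ j ∈ range k, (fun j => if hj : j < N then f ⟨j, hj⟩ else 0) j := by
  have h1 : ∑ i ∈ Finset.univ.filter (fun i : Fin N => (i : ℕ) < k), f i
      = ∑ i : Fin N, (fun j : ℕ => if j < k then (if hj : j < N then f ⟨j, hj⟩ else 0) else 0) (i : ℕ) := by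
    rw [Finset.sum_filter]
    apply Finset.sum_congr rfl
    intro i _
    by_cases hik : (i:ℕ) < k
    · simp [hik, i.isLt]
    · simp [hik]
  have h2 := Fin.sum_univ_eq_sum_range
    (fun j : ℕ => if j < k then (if hj : j < N then f ⟨j, hj⟩ else 0) else 0) N
  rw [h1, h2]
  rw [← Finset.sum_subset (Finset.range_subset_range.2 hk)]
  · apply Finset.sum_congr rfl
    intro j hj
    rw [mem_range] at hj
    simp [hj]
  · intro j _ hj
    rw [mem_range] at hj
    simp [hj]

section Reduction

variable (n : ℕ) (r : Fin (n+1) → ℤ) (hR : IsFeasible (n+1) r)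

lemma h0_eq : hfun (n+1) r 0 = r 0 := by
  rw [hfun_lt (n+1) r 0 (by omega)]
  simp

lemma redr_mono_aux (n' : ℕ) (r : Fin (n'+1+1) → ℤ) (hR : IsFeasible (n'+1+1) r) :
    Monotone (redr (n'+1) r) := by
  obtain ⟨Hdrop, Hpre, Hsum, Hp0⟩ := feas_facts (n'+1+1) r (by omega) hR
  have hm0 : hfun (n'+1+1) r 0 = r 0 := h0_eq (n'+1) r
  have hval : ∀ (j : ℕ) (hj : j < n'+1+1), hfun (n'+1+1) r j = r ⟨j, hj⟩ - j :=
    fun j hj => hfun_lt (n'+1+1) r j hj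
  rw [Fin.monotone_iff_le_succ]
  intro i
  have hfeq1 : (i.castSucc).succ = (⟨(i:ℕ)+1, by omega⟩ : Fin (n'+1+1)) := by
    rw [Fin.ext_iff]; simp
  have hfeq2 : (i.succ).succ = (⟨(i:ℕ)+2, by omega⟩ : Fin (n'+1+1)) := by
    rw [Fin.ext_iff]; simp
  have hrmono : r (i.castSucc).succ ≤ r (i.succ).succ := by
    apply hR.1
    rw [Fin.le_def]
    simp
  simp only [redr, Fin.coe_castSucc, Fin.val_succ]
  by_cases hb1 : ((i:ℕ)+1) ∈ Bred (n'+1) r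
  · by_cases hb2 : ((i:ℕ)+1+1) ∈ Bred (n'+1) r
    · simp only [if_pos hb1, if_pos hb2]; omega
    · -- bad case: use closure
      have hnd : ¬ (hfun (n'+1+1) r ((i:ℕ)+1+1) = hfun (n'+1+1) r ((i:ℕ)+1) - 1) := by
        intro hc
        apply hb2
        have hb1' := hb1
        unfold Bred at hb1' ⊢
        exact Bset_closure ((i:ℕ)+1) hb1' hc (by omega)
      have hd := Hdrop ((i:ℕ)+1)
      have hv1 := hval (((i.castSucc).succ : Fin (n'+1+1)) : ℕ) ((i.castSucc).succ).isLt
      have hv2 := hval (((i.succ).succ : Fin (n'+1+1)) : ℕ) ((i.succ).succ).isLt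
      rw [Fin.eta] at hv1 hv2
      rw [show (((i.castSucc).succ : Fin (n'+1+1)) : ℕ) = (i:ℕ)+1 by simp] at hv1
      rw [show (((i.succ).succ : Fin (n'+1+1)) : ℕ) = (i:ℕ)+1+1 by simp] at hv2
      simp only [if_pos hb1, if_neg hb2]
      push_cast at hv1 hv2 ⊢
      omega
  · by_cases hb2 : ((i:ℕ)+1+1) ∈ Bred (n'+1) r
    · simp only [if_neg hb1, if_pos hb2]; omega
    · simp only [if_neg hb1, if_neg hb2]; omega

lemma reduction (hR : IsFeasible (n+1) r) :
    IsFeasible n (redr n r) ∧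
    (∑ i ∈ Finset.univ.filter (fun i : Fin n => 0 < redr n r i - (i:ℕ)), (redr n r i - (i:ℕ)))
      = (∑ i ∈ Finset.univ.filter (fun i : Fin (n+1) => 0 < r i - (i:ℕ)), (r i - (i:ℕ))) - r 0 ∧
    ((Bred n r).card : ℤ) = r 0 ∧ (∀ x ∈ Bred n r, 1 ≤ x ∧ x ≤ n) := by
  obtain ⟨Hdrop, Hpre, Hsum, Hp0⟩ := feas_facts (n+1) r (by omega) hR
  have hm0 : hfun (n+1) r 0 = r 0 := h0_eq n r
  have Hzero : ∀ j, n + 1 ≤ j → hfun (n+1) r j = 0 := fun j hj => hfun_ge (n+1) r j hj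
  have hcB : ((Bred n r).card : ℤ) = r 0 := by
    rw [Bred, ← hm0]
    exact card_Bset (by omega) Hp0 Hdrop Hsum
  have hBmem : ∀ x ∈ Bred n r, 1 ≤ x ∧ x ≤ n := by
    intro x hx
    rw [Bred, ← hm0] at hx
    rw [mem_Bset] at hx
    rcases hx with ⟨h1, h2, h3⟩
    rcases Nat.eq_zero_or_pos x with rfl | hpos
    · omega
    · omega
  have hval : ∀ (j : ℕ) (hj : j < n+1), hfun (n+1) r j = r ⟨j, hj⟩ - j :=
    fun j hj => hfun_lt (n+1) r j hj
  have hsucc_val : ∀ (i : Fin n), hfun (n+1) r ((i:ℕ)+1) = r i.succ - ((i:ℕ)+1) := by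
    intro i
    have pa : ((i:ℕ)+1) < n+1 := by omega
    have e : (⟨(i:ℕ)+1, pa⟩ : Fin (n+1)) = i.succ := by rw [Fin.ext_iff]; simp
    rw [hval ((i:ℕ)+1) pa, e]
    push_cast; ring
  -- chi sums
  have hchi : ∀ k, ∑ j ∈ range k, (if (j+1) ∈ Bred n r then (1:ℤ) else 0)
      = (((Bred n r).filter (fun x => x ≤ k)).card : ℤ) := by
    intro k
    have hset : (Bred n r).filter (fun x => x ≤ k) = (range (k+1)).filter (· ∈ Bred n r) := by
      ext x
      simp only [mem_filter, mem_range]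
      constructor
      · rintro ⟨h1, h2⟩; exact ⟨by omega, h1⟩
      · rintro ⟨h1, h2⟩; exact ⟨h2, by omega⟩
    rw [hset, Finset.card_filter, Finset.sum_range_succ']
    have h0B : (if (0:ℕ) ∈ Bred n r then (1:ℕ) else 0) = 0 := by
      rw [if_neg]
      intro hc
      have := (hBmem 0 hc).1
      omega
    rw [h0B]
    push_cast
    simp
  have hchin : ∑ j ∈ range n, (if (j+1) ∈ Bred n r then (1:ℤ) else 0) = ((Bred n r).card : ℤ) := by
    rw [hchi n]
    congr 2
    apply Finset.filter_true_of_mem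
    intro x hx
    exact (hBmem x hx).2
  -- monotonicity
  have hmono : Monotone (redr n r) := by
    cases n with
    | zero => exact fun a => a.elim0
    | succ n' => exact redr_mono_aux n' r hR
  -- total sum
  have hrtot : ∑ i : Fin (n+1), r i = ((n+1).choose 2 : ℤ) := hR.2.1
  have hsum_redr : ∑ i : Fin n, redr n r i = (n.choose 2 : ℤ) := by
    unfold redr
    rw [Finset.sum_add_distrib, Finset.sum_sub_distrib]
    have e1 : ∑ i : Fin n, (if ((i:ℕ)+1) ∈ Bred n r then (1:ℤ) else 0) = ((Bred n r).card : ℤ) := by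
      rw [Fin.sum_univ_eq_sum_range (fun j => if (j+1) ∈ Bred n r then (1:ℤ) else 0) n]
      exact hchin
    have e2 : ∑ i : Fin n, r i.succ = ∑ i : Fin (n+1), r i - r 0 := by
      rw [Fin.sum_univ_succ r]; ring
    rw [e1, e2, hcB, hrtot]
    simp only [Finset.sum_const, Finset.card_univ, Fintype.card_fin, nsmul_eq_mul, mul_one]
    rw [Nat.choose_succ_succ n 1, Nat.choose_one_right]
    push_cast
    ring
  -- Landau for redr
  have hlandau : ∀ k : ℕ, k ≤ n →
      (k.choose 2 : ℤ) ≤ ∑ i ∈ Finset.univ.filter (fun i : Fin n => (i : ℕ) < k), redr n r i := by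
    intro k hk
    rw [bridge_sum' n (redr n r) k hk]
    have hterm : ∀ j ∈ range k, (fun j => if hj : j < n then redr n r ⟨j, hj⟩ else 0) j
        = (if hj : j+1 < n+1 then r ⟨j+1, hj⟩ else 0) - 1 + (if (j+1) ∈ Bred n r then (1:ℤ) else 0) := by
      intro j hj
      rw [mem_range] at hj
      have hjn : j < n := by omega
      have pj : j + 1 < n+1 := by omega
      simp only [dif_pos hjn, dif_pos pj]
      unfold redr
      have e : (⟨j, hjn⟩ : Fin n).succ = (⟨j+1, pj⟩ : Fin (n+1)) := by
        rw [Fin.ext_iff]; simp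
      rw [e]
    rw [Finset.sum_congr rfl hterm, Finset.sum_add_distrib, Finset.sum_sub_distrib, hchi k]
    have hS1 : ∑ j ∈ range k, (if hj : j+1 < n+1 then r ⟨j+1, hj⟩ else 0)
        = ∑ x ∈ range (k+1), (if hx : x < n+1 then r ⟨x, hx⟩ else 0) - r 0 := by
      rw [Finset.sum_range_succ' (fun x => if hx : x < n+1 then r ⟨x, hx⟩ else (0:ℤ)) k]
      simp
    have hS2 : ∑ x ∈ range (k+1), (if hx : x < n+1 then r ⟨x, hx⟩ else (0:ℤ))
        = ∑ j ∈ range (k+1), hfun (n+1) r j + ((k+1).choose 2 : ℤ) := by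
      rw [← sum_range_choose2 (k+1), ← Finset.sum_add_distrib]
      apply Finset.sum_congr rfl
      intro x hx
      rw [mem_range] at hx
      rw [dif_pos (show x < n+1 by omega), hval x (by omega)]
      ring
    have hpb := prefix_bound (n := n+1) (h := hfun (n+1) r) (by omega) Hp0 Hdrop Hzero Hpre Hsum k
    rw [hm0] at hpb
    have hBeq : Bset (n+1) (hfun (n+1) r) (r 0) = Bred n r := by rw [Bred]
    rw [hBeq] at hpb
    have hch : ((k+1).choose 2 : ℤ) = (k.choose 2 : ℤ) + k := by
      rw [Nat.choose_succ_succ k 1, Nat.choose_one_right]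
      push_cast; ring
    rw [hS1, hS2, hch]
    have hcount : ∑ j ∈ range k, (if (j+1) ∈ Bred n r then (1:ℤ) else 0) ≥ 0 := by positivity
    simp only [Finset.sum_const, Finset.card_range, nsmul_eq_mul, mul_one]
    omega
  -- ell identity
  have hell : (∑ i ∈ Finset.univ.filter (fun i : Fin n => 0 < redr n r i - (i:ℕ)), (redr n r i - (i:ℕ)))
      = (∑ i ∈ Finset.univ.filter (fun i : Fin (n+1) => 0 < r i - (i:ℕ)), (r i - (i:ℕ))) - r 0 := by
    rw [Finset.sum_filter, Finset.sum_filter, Fin.sum_univ_succ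
      (f := fun i : Fin (n+1) => if 0 < r i - (i:ℕ) then r i - (i:ℕ) else 0)]
    have hterm0 : (if 0 < r 0 - ((0 : Fin (n+1)):ℕ) then r 0 - ((0 : Fin (n+1)):ℕ) else 0) = r 0 := by
      simp only [Fin.val_zero, Nat.cast_zero, sub_zero]
      rw [← hm0] at *
      split_ifs with hc
      · rfl
      · omega
    rw [hterm0]
    have hterms : ∀ i : Fin n, (if 0 < redr n r i - (i:ℕ) then redr n r i - (i:ℕ) else 0)
        = (if 0 < r i.succ - ((i.succ:ℕ):ℤ) then r i.succ - ((i.succ:ℕ):ℤ) else 0) := by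
      intro i
      have hvs := hsucc_val i
      by_cases hb : ((i:ℕ)+1) ∈ Bred n r
      · have hneg : hfun (n+1) r ((i:ℕ)+1) < 0 := by
          have := hb
          rw [Bred, ← hm0, mem_Bset] at this
          exact this.2.1
        rw [hvs] at hneg
        have hred : redr n r i - (i:ℕ) = r i.succ - ((i:ℕ)+1) + 1 := by
          unfold redr
          rw [if_pos hb]
          ring
        rw [if_neg (by rw [hred]; omega), if_neg (by simp only [Fin.val_succ]; push_cast; omega)]
      · have hred : redr n r i - (i:ℕ) = r i.succ - ((i:ℕ)+1) := by
          unfold redr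
          rw [if_neg hb]
          ring
        have hvs2 : r i.succ - ((i.succ:ℕ):ℤ) = r i.succ - ((i:ℕ)+1) := by
          simp only [Fin.val_succ]; push_cast; ring
        rw [hred, hvs2]
    rw [Finset.sum_congr rfl (fun i _ => hterms i)]
    ring
  exact ⟨⟨hmono, hsum_redr, hlandau⟩, hell, hcB, hBmem⟩

end Reduction

/-! ### Tournaments: lower bound -/


def rowUp {n : ℕ} (A : Fin n → Fin n → ℤ) (i : Fin n) : ℕ :=
  (Finset.univ.filter (fun j => i < j ∧ A i j = 1)).card

lemma upsets_eq_sum_rowUp {n : ℕ} (A : Fin n → Fin n → ℤ) :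
    upsets A = ∑ i, rowUp A i := by
  unfold upsets
  rw [Finset.card_eq_sum_card_fiberwise
    (f := Prod.fst) (t := Finset.univ) (fun x _ => Finset.mem_univ _)]
  apply Finset.sum_congr rfl
  intro i _
  apply Finset.card_bij (fun p _ => p.2)
  · intro p hp
    simp only [mem_filter, Finset.mem_univ, true_and] at hp ⊢
    obtain ⟨⟨h1, h2⟩, h3⟩ := hp
    rw [h3] at h1 h2
    exact ⟨h1, h2⟩
  · intro p hp q hq hpq
    simp only [mem_filter] at hp hq
    exact Prod.ext (hp.2.trans hq.2.symm) hpq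
  · intro j hj
    simp only [mem_filter, Finset.mem_univ, true_and] at hj
    exact ⟨(i, j), by simp [hj], rfl⟩

lemma row_bound {n : ℕ} (A : Fin n → Fin n → ℤ) (hT : IsTournament A) (i : Fin n) :
    (∑ j, A i j) - (i:ℕ) ≤ (rowUp A i : ℤ) := by
  obtain ⟨hdiag, hoff⟩ := hT
  have hsplit := Finset.sum_filter_add_sum_filter_not Finset.univ (fun j => i < j) (fun j => A i j)
  have hb2 : ∑ j ∈ Finset.univ.filter (fun j => i < j), A i j = (rowUp A i : ℤ) := by
    have : ∀ j ∈ Finset.univ.filter (fun j => i < j), A i j = if A i j = 1 then 1 else 0 := by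
      intro j hj
      simp only [mem_filter] at hj
      rcases hoff i j (by intro hc; subst hc; exact lt_irrefl _ hj.2) with ⟨h1, _⟩ | ⟨h1, _⟩
      · rw [h1, if_pos rfl]
      · rw [h1, if_neg (by norm_num)]
    rw [Finset.sum_congr rfl this, Finset.sum_boole, Finset.filter_filter, rowUp]
  have hb1 : ∑ j ∈ Finset.univ.filter (fun j => ¬ i < j), A i j ≤ (i:ℕ) := by
    have hmem : i ∈ Finset.univ.filter (fun j : Fin n => ¬ i < j) := by
      simp
    rw [← Finset.sum_erase_add _ _ hmem, hdiag i, add_zero]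
    have hcT : (Finset.univ.filter (fun j : Fin n => ¬ i < j)) = Finset.Iic i := by
      ext j; simp [Finset.mem_Iic, not_lt]
    calc ∑ j ∈ (Finset.univ.filter (fun j : Fin n => ¬ i < j)).erase i, A i j
        ≤ ∑ _j ∈ (Finset.univ.filter (fun j : Fin n => ¬ i < j)).erase i, (1:ℤ) := by
          apply Finset.sum_le_sum
          intro j hj
          rw [Finset.mem_erase] at hj
          rcases hoff i j (fun hc => hj.1 hc.symm) with ⟨h1, _⟩ | ⟨h1, _⟩ <;> omega
      _ = (((Finset.univ.filter (fun j : Fin n => ¬ i < j)).erase i).card : ℤ) := by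
          rw [Finset.sum_const]; simp
      _ ≤ (i:ℕ) := by
          rw [Finset.card_erase_of_mem hmem, hcT, Fin.card_Iic]
          push_cast
          omega
  omega

lemma lower_bound {n : ℕ} (A : Fin n → Fin n → ℤ) (hT : IsTournament A) (r : Fin n → ℤ)
    (hs : ∀ i, (∑ j, A i j) = r i) :
    (∑ i ∈ Finset.univ.filter (fun i : Fin n => 0 < r i - (i:ℕ)), (r i - (i:ℕ)))
      ≤ (upsets A : ℤ) := by
  have h1 : ∀ i : Fin n, r i - (i:ℕ) ≤ (rowUp A i : ℤ) := by
    intro i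
    have := row_bound A hT i
    rw [hs i] at this
    exact this
  calc ∑ i ∈ Finset.univ.filter (fun i : Fin n => 0 < r i - (i:ℕ)), (r i - (i:ℕ))
      ≤ ∑ i ∈ Finset.univ.filter (fun i : Fin n => 0 < r i - (i:ℕ)), (rowUp A i : ℤ) :=
        Finset.sum_le_sum (fun i _ => h1 i)
    _ ≤ ∑ i : Fin n, (rowUp A i : ℤ) := by
        apply Finset.sum_le_sum_of_subset_of_nonneg (Finset.filter_subset _ _)
        intro i _ _
        positivity
    _ = (upsets A : ℤ) := by
        rw [upsets_eq_sum_rowUp]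
        push_cast
        ring

/-! ### Extending a tournament by a new first vertex -/

def extA (n : ℕ) (B : Finset ℕ) (A' : Fin n → Fin n → ℤ) : Fin (n+1) → Fin (n+1) → ℤ :=
  fun i j =>
    if i = j then 0
    else if hi : (i:ℕ) = 0 then (if (j:ℕ) ∈ B then 1 else 0)
    else if hj : (j:ℕ) = 0 then (if (i:ℕ) ∈ B then 0 else 1)
    else A' ⟨(i:ℕ)-1, by have := i.isLt; omega⟩ ⟨(j:ℕ)-1, by have := j.isLt; omega⟩

section Ext

variable (n : ℕ) (B : Finset ℕ) (A' : Fin n → Fin n → ℤ)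

lemma extA_diag (i : Fin (n+1)) : extA n B A' i i = 0 := by
  unfold extA; rw [if_pos rfl]

lemma extA_zero_succ (j : Fin n) :
    extA n B A' 0 j.succ = if ((j:ℕ)+1) ∈ B then 1 else 0 := by
  unfold extA
  rw [if_neg (by simp [Fin.ext_iff]), dif_pos (by simp)]
  norm_num

lemma extA_zero_ne (j : Fin (n+1)) (hj : j ≠ 0) :
    extA n B A' 0 j = if (j:ℕ) ∈ B then 1 else 0 := by
  unfold extA
  rw [if_neg (by exact fun hc => hj hc.symm), dif_pos (by simp)]

lemma extA_succ_zero (i : Fin n) :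
    extA n B A' i.succ 0 = if ((i:ℕ)+1) ∈ B then 0 else 1 := by
  unfold extA
  rw [if_neg (by simp [Fin.ext_iff]), dif_neg (by simp), dif_pos (by simp)]
  norm_num

lemma extA_succ_succ (hd : ∀ i, A' i i = 0) (i j : Fin n) :
    extA n B A' i.succ j.succ = A' i j := by
  unfold extA
  by_cases hij : i = j
  · subst hij
    rw [if_pos rfl, hd i]
  · rw [if_neg (by simp [Fin.succ_inj, hij]), dif_neg (by simp), dif_neg (by simp)]
    congr 1 <;> (rw [Fin.ext_iff]; simp)

lemma extA_tournament (hT' : IsTournament A') : IsTournament (extA n B A') := by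
  refine ⟨extA_diag n B A', ?_⟩
  intro i j hij
  induction i using Fin.cases with
  | zero =>
    induction j using Fin.cases with
    | zero => exact absurd rfl hij
    | succ j =>
      rw [extA_zero_succ, extA_succ_zero]
      by_cases hb : ((j:ℕ)+1) ∈ B
      · left; rw [if_pos hb, if_pos hb]; exact ⟨rfl, rfl⟩
      · right; rw [if_neg hb, if_neg hb]; exact ⟨rfl, rfl⟩
  | succ i =>
    induction j using Fin.cases with
    | zero =>
      rw [extA_zero_succ, extA_succ_zero]
      by_cases hb : ((i:ℕ)+1) ∈ B
      · right; rw [if_pos hb, if_pos hb]; exact ⟨rfl, rfl⟩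
      · left; rw [if_neg hb, if_neg hb]; exact ⟨rfl, rfl⟩
    | succ j =>
      rw [extA_succ_succ n B A' hT'.1, extA_succ_succ n B A' hT'.1]
      exact hT'.2 i j (by simpa [Fin.succ_inj] using hij)

lemma chi_sum_card (hBm : ∀ x ∈ B, 1 ≤ x ∧ x ≤ n) :
    ∑ j ∈ range n, (if (j+1) ∈ B then (1:ℤ) else 0) = (B.card : ℤ) := by
  have hset : B = (range (n+1)).filter (· ∈ B) := by
    ext x
    simp only [mem_filter, mem_range]
    constructor
    · intro hx; exact ⟨by have := (hBm x hx).2; omega, hx⟩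
    · intro hx; exact hx.2
  conv_rhs => rw [hset]
  rw [Finset.card_filter, Finset.sum_range_succ']
  have h0B : (if (0:ℕ) ∈ B then (1:ℕ) else 0) = 0 := by
    rw [if_neg]
    intro hc
    have := (hBm 0 hc).1
    omega
  rw [h0B]
  push_cast
  simp

lemma extA_scores (hT' : IsTournament A') (hBm : ∀ x ∈ B, 1 ≤ x ∧ x ≤ n)
    (r : Fin (n+1) → ℤ) (hs' : ∀ i, (∑ j, A' i j) = redr n r i)
    (hcB : ((B).card : ℤ) = r 0) (hBeq : B = Bred n r) :
    ∀ i, (∑ j, extA n B A' i j) = r i := by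
  intro i
  induction i using Fin.cases with
  | zero =>
    rw [Fin.sum_univ_succ, extA_diag, zero_add]
    have : ∀ j : Fin n, extA n B A' 0 j.succ = (fun x : ℕ => if (x+1) ∈ B then (1:ℤ) else 0) (j:ℕ) := by
      intro j
      rw [extA_zero_succ]
    rw [Finset.sum_congr rfl (fun j _ => this j),
      Fin.sum_univ_eq_sum_range (fun x : ℕ => if (x+1) ∈ B then (1:ℤ) else 0) n,
      chi_sum_card n B hBm, hcB]
  | succ i =>
    rw [Fin.sum_univ_succ, extA_succ_zero]
    have : ∀ j : Fin n, extA n B A' i.succ j.succ = A' i j :=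
      extA_succ_succ n B A' hT'.1 i
    rw [Finset.sum_congr rfl (fun j _ => this j), hs' i]
    unfold redr
    rw [← hBeq]
    by_cases hb : ((i:ℕ)+1) ∈ B
    · rw [if_pos hb, if_pos hb]; ring
    · rw [if_neg hb, if_neg hb]; ring

lemma extA_upsets (hT' : IsTournament A') (hBm : ∀ x ∈ B, 1 ≤ x ∧ x ≤ n) :
    (upsets (extA n B A') : ℤ) = B.card + upsets A' := by
  unfold upsets
  have hsplit := Finset.card_filter_add_card_filter_not
    (s := Finset.univ.filter (fun p : Fin (n+1) × Fin (n+1) => p.1 < p.2 ∧ extA n B A' p.1 p.2 = 1))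
    (p := fun p => p.1 = 0)
  have hc1 : ((Finset.univ.filter (fun p : Fin (n+1) × Fin (n+1) =>
      p.1 < p.2 ∧ extA n B A' p.1 p.2 = 1)).filter (fun p => p.1 = 0)).card = B.card := by
    apply Finset.card_bij (fun p _ => ((p.2 : ℕ) : ℕ))
    · intro p hp
      simp only [mem_filter, Finset.mem_univ, true_and] at hp
      obtain ⟨⟨hlt, hone⟩, h0⟩ := hp
      rw [h0] at hlt hone
      have hne : p.2 ≠ 0 := by
        intro hc; rw [hc] at hlt; exact absurd hlt (lt_irrefl _)
      rw [extA_zero_ne n B A' p.2 hne] at hone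
      by_contra hc
      rw [if_neg hc] at hone
      norm_num at hone
    · intro p hp q hq hpq
      simp only [mem_filter, Finset.mem_univ, true_and] at hp hq
      have h2 : p.2 = q.2 := Fin.ext hpq
      exact Prod.ext (hp.2.trans hq.2.symm) h2
    · intro b hb
      have hble := hBm b hb
      refine ⟨(0, ⟨b, by omega⟩), ?_, rfl⟩
      simp only [mem_filter, Finset.mem_univ, true_and]
      refine ⟨⟨?_, ?_⟩, by simp⟩
      · rw [Fin.lt_def]
        simp only [Fin.val_zero]
        omega
      · rw [extA_zero_ne n B A' ⟨b, by omega⟩ (Fin.ne_of_val_ne (by simp; omega))]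
        simp only
        rw [if_pos hb]
  have hc2 : ((Finset.univ.filter (fun p : Fin (n+1) × Fin (n+1) =>
      p.1 < p.2 ∧ extA n B A' p.1 p.2 = 1)).filter (fun p => ¬ p.1 = 0)).card = upsets A' := by
    rw [upsets]
    symm
    apply Finset.card_bij (fun (p : Fin n × Fin n) _ => ((p.1.succ, p.2.succ) : Fin (n+1) × Fin (n+1)))
    · intro p hp
      simp only [mem_filter, Finset.mem_univ, true_and] at hp ⊢
      refine ⟨⟨?_, ?_⟩, ?_⟩
      · rw [Fin.lt_def] at hp ⊢
        simp only [Fin.val_succ]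
        omega
      · rw [extA_succ_succ n B A' hT'.1]
        exact hp.2
      · simp [Fin.ext_iff]
    · intro p hp q hq hpq
      have h1 : p.1 = q.1 := Fin.succ_injective n (congrArg Prod.fst hpq)
      have h2 : p.2 = q.2 := Fin.succ_injective n (congrArg Prod.snd hpq)
      exact Prod.ext h1 h2
    · intro p hp
      simp only [mem_filter, Finset.mem_univ, true_and] at hp
      obtain ⟨⟨hlt, hone⟩, h0⟩ := hp
      have hp2 : p.2 ≠ 0 := by
        intro hc
        rw [hc] at hlt
        rw [Fin.lt_def] at hlt
        simp at hlt
      have hp1 : p.1 ≠ 0 := h0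
      refine ⟨(p.1.pred hp1, p.2.pred hp2), ?_, ?_⟩
      · simp only [mem_filter, Finset.mem_univ, true_and]
        constructor
        · rw [Fin.lt_def] at hlt ⊢
          simp only [Fin.coe_pred]
          have h1 : (p.1 : ℕ) ≠ 0 := fun hc => hp1 (Fin.ext hc)
          omega
        · rw [← extA_succ_succ n B A' hT'.1, Fin.succ_pred, Fin.succ_pred]
          exact hone
      · rw [Prod.ext_iff]
        simp only
        exact ⟨Fin.succ_pred _ _, Fin.succ_pred _ _⟩
  have hAeq : upsets A'
      = (Finset.univ.filter (fun p : Fin n × Fin n => p.1 < p.2 ∧ A' p.1 p.2 = 1)).card := rfl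
  push_cast [← hc1, ← hc2, ← hAeq]
  omega

end Ext

/-! ### Main existence result and Ryser's theorem -/

lemma exists_min : ∀ (n : ℕ) (r : Fin n → ℤ), IsFeasible n r →
    ∃ A : Fin n → Fin n → ℤ, IsTournament A ∧ (∀ i, (∑ j, A i j) = r i) ∧
      (upsets A : ℤ) ≤ ∑ i ∈ Finset.univ.filter (fun i : Fin n => 0 < r i - (i:ℕ)),
        (r i - (i:ℕ)) := by
  intro n
  induction n with
  | zero =>
    intro r _
    refine ⟨fun i j => 0, ⟨fun i => i.elim0, fun i => i.elim0⟩, fun i => i.elim0, ?_⟩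
    have h1 : upsets (fun (i j : Fin 0) => (0:ℤ)) = 0 := by
      unfold upsets
      simp
    rw [h1]
    simp
  | succ n ih =>
    intro r hR
    obtain ⟨hfeas', hell, hcB, hBm⟩ := reduction n r hR
    obtain ⟨A', hT', hs', hu'⟩ := ih (redr n r) hfeas'
    refine ⟨extA n (Bred n r) A', extA_tournament n (Bred n r) A' hT',
      extA_scores n (Bred n r) A' hT' hBm r hs' hcB rfl, ?_⟩
    rw [extA_upsets n (Bred n r) A' hT' hBm, hell] at *
    omega

theorem ryser_main (n : ℕ) (r : Fin n → ℤ) (hR : IsFeasible n r) :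
    IsLeast {m : ℤ | ∃ A : Fin n → Fin n → ℤ,
        IsTournament A ∧ (∀ i, (∑ j, A i j) = r i) ∧ (upsets A : ℤ) = m}
      (∑ i ∈ Finset.univ.filter (fun i : Fin n => 0 < r i - (i : ℕ)),
        (r i - (i : ℕ))) := by
  constructor
  · obtain ⟨A, hT, hs, hu⟩ := exists_min n r hR
    exact ⟨A, hT, hs, le_antisymm hu (lower_bound A hT r hs)⟩
  · rintro x ⟨A, hT, hs, rfl⟩
    exact lower_bound A hT r hs

end RyserAux

/-- Ryser's theorem: for a feasible score sequence `r`, the minimum number of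
upsets over all tournaments with score sequence `r` equals
`ℓ = ∑_{h_i > 0} h_i`, where `h_i = r_i - (i-1)`. -/
theorem ryser_min_upsets (n : ℕ) (r : Fin n → ℤ) (hR : IsFeasible n r) :
    IsLeast {m : ℤ | ∃ A : Fin n → Fin n → ℤ,
        IsTournament A ∧ (∀ i, (∑ j, A i j) = r i) ∧ (upsets A : ℤ) = m}
      (∑ i ∈ Finset.univ.filter (fun i : Fin n => 0 < r i - (i : ℕ)),
        (r i - (i : ℕ))) := ryser_main n r hR
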